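/- Let T be the final-size map built from positive parameters βᵢⱼ, γᵢ, μᵢ and initial data S₁₀, S₂₀ > 0, I₁₀, I₂₀ ≥ 0, R₁₀, R₂₀ ≥ 0 with I₁₀ + I₂₀ > 0 (i.e. I₀ > 0). Then: (a) T is strictly monotone: if X, Y ∈ ℝ²₊ and xⱼ < yⱼ for j = 1,2, then Tᵢ(X) < Tᵢ(Y) for i = 1,2; (b) 0 < Tᵢ(0,0) for i = 1,2; (c) Tᵢ(0,0) < Tᵢ(S₁₀,S₂₀) for i = 1,2; and (d) Tᵢ(S₁₀,S₂₀) < Sᵢ₀ for i = 1,2. -/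
import Mathlib


open Filter

noncomputable def Tmap (β11 β12 β21 β22 μ1 μ2 S10 S20 ε1 ε2 Z1 Z2 N10 N20 : ℝ) :
    ℝ × ℝ → ℝ × ℝ := fun X =>
  (S10 * ((ε1 * X.1 + Z1) / N10) ^ (β11 / μ1) * ((ε2 * X.2 + Z2) / N20) ^ (β12 / μ2),
   S20 * ((ε1 * X.1 + Z1) / N10) ^ (β21 / μ1) * ((ε2 * X.2 + Z2) / N20) ^ (β22 / μ2))

set_option maxHeartbeats 1000000 in
theorem stmt_8
    (β11 β12 β21 β22 γ1 γ2 μ1 μ2 : ℝ)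
    (hβ11 : 0 < β11) (hβ12 : 0 < β12) (hβ21 : 0 < β21) (hβ22 : 0 < β22)
    (hγ1 : 0 < γ1) (hγ2 : 0 < γ2) (hμ1 : 0 < μ1) (hμ2 : 0 < μ2)
    (S10 S20 I10 I20 R10 R20 : ℝ)
    (hS10 : 0 < S10) (hS20 : 0 < S20)
    (hI10 : 0 ≤ I10) (hI20 : 0 ≤ I20)
    (hR10 : 0 ≤ R10) (hR20 : 0 ≤ R20)
    (ε1 ε2 Z1 Z2 N10 N20 : ℝ)
    (hN10 : N10 = S10 + I10 + R10) (hN20 : N20 = S20 + I20 + R20)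
    (hε1 : ε1 = μ1 / (γ1 + μ1)) (hε2 : ε2 = μ2 / (γ2 + μ2))
    (hZ1 : Z1 = (1 - ε1) * N10 + ε1 * R10) (hZ2 : Z2 = (1 - ε2) * N20 + ε2 * R20)
    (hI0 : 0 < I10 + I20)
    (T : ℝ × ℝ → ℝ × ℝ)
    (hT : T = Tmap β11 β12 β21 β22 μ1 μ2 S10 S20 ε1 ε2 Z1 Z2 N10 N20)
    :
    (∀ x1 x2 y1 y2 : ℝ, 0 ≤ x1 → 0 ≤ x2 → x1 < y1 → x2 < y2 →
      (T (x1, x2)).1 < (T (y1, y2)).1 ∧ (T (x1, x2)).2 < (T (y1, y2)).2) ∧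
    (0 < (T (0, 0)).1 ∧ 0 < (T (0, 0)).2) ∧
    ((T (0, 0)).1 < (T (S10, S20)).1 ∧ (T (0, 0)).2 < (T (S10, S20)).2) ∧
    ((T (S10, S20)).1 < S10 ∧ (T (S10, S20)).2 < S20) := by
  have hε1pos : 0 < ε1 := by rw [hε1]; positivity
  have hε2pos : 0 < ε2 := by rw [hε2]; positivity
  have hε1lt : ε1 < 1 := by
    rw [hε1, div_lt_one (by linarith)]; linarith
  have hε2lt : ε2 < 1 := by
    rw [hε2, div_lt_one (by linarith)]; linarith
  have hN10pos : 0 < N10 := by rw [hN10]; linarith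
  have hN20pos : 0 < N20 := by rw [hN20]; linarith
  have hZ1pos : 0 < Z1 := by
    rw [hZ1]
    have : 0 < (1 - ε1) * N10 := by nlinarith
    nlinarith
  have hZ2pos : 0 < Z2 := by
    rw [hZ2]
    have : 0 < (1 - ε2) * N20 := by nlinarith
    nlinarith
  have hp11 : 0 < β11 / μ1 := by positivity
  have hp12 : 0 < β12 / μ2 := by positivity
  have hp21 : 0 < β21 / μ1 := by positivity
  have hp22 : 0 < β22 / μ2 := by positivity
  -- key monotonicity of a single factor
  have key : ∀ ε Z N p x y : ℝ, 0 < ε → 0 < Z → 0 < N → 0 < p → 0 ≤ x → x < y →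
      ((ε * x + Z) / N) ^ p < ((ε * y + Z) / N) ^ p := by
    intro ε Z N p x y hε hZ hN hp hx hxy
    apply Real.rpow_lt_rpow (by positivity) _ hp
    apply div_lt_div_of_pos_right ?_ hN
    nlinarith
  have pos : ∀ ε Z N p x : ℝ, 0 < ε → 0 < Z → 0 < N → 0 ≤ x →
      0 < ((ε * x + Z) / N) ^ p := by
    intro ε Z N p x hε hZ hN hx
    apply Real.rpow_pos_of_pos; positivity
  have prodlt : ∀ S a b a' b' : ℝ, 0 < S → 0 < a → 0 < b → a < a' → b < b' →
      S * a * b < S * a' * b' := by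
    intro S a b a' b' hS ha hb haa hbb
    have h1 : a * b < a' * b' := mul_lt_mul'' haa hbb ha.le hb.le
    calc S * a * b = S * (a * b) := by ring
      _ < S * (a' * b') := by exact mul_lt_mul_of_pos_left h1 hS
      _ = S * a' * b' := by ring
  subst hT
  refine ⟨?_, ⟨?_, ?_⟩, ⟨?_, ?_⟩, ?_, ?_⟩
  · intro x1 x2 y1 y2 hx1 hx2 h1 h2
    constructor
    · exact prodlt _ _ _ _ _ hS10
        (pos ε1 Z1 N10 _ x1 hε1pos hZ1pos hN10pos hx1)
        (pos ε2 Z2 N20 _ x2 hε2pos hZ2pos hN20pos hx2)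
        (key ε1 Z1 N10 _ x1 y1 hε1pos hZ1pos hN10pos hp11 hx1 h1)
        (key ε2 Z2 N20 _ x2 y2 hε2pos hZ2pos hN20pos hp12 hx2 h2)
    · exact prodlt _ _ _ _ _ hS20
        (pos ε1 Z1 N10 _ x1 hε1pos hZ1pos hN10pos hx1)
        (pos ε2 Z2 N20 _ x2 hε2pos hZ2pos hN20pos hx2)
        (key ε1 Z1 N10 _ x1 y1 hε1pos hZ1pos hN10pos hp21 hx1 h1)
        (key ε2 Z2 N20 _ x2 y2 hε2pos hZ2pos hN20pos hp22 hx2 h2)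
  · have := pos ε1 Z1 N10 (β11/μ1) 0 hε1pos hZ1pos hN10pos le_rfl
    have := pos ε2 Z2 N20 (β12/μ2) 0 hε2pos hZ2pos hN20pos le_rfl
    simp only [Tmap]; positivity
  · have h1 := pos ε1 Z1 N10 (β21/μ1) 0 hε1pos hZ1pos hN10pos le_rfl
    have h2 := pos ε2 Z2 N20 (β22/μ2) 0 hε2pos hZ2pos hN20pos le_rfl
    simp only [Tmap]; positivity
  · exact prodlt _ _ _ _ _ hS10
      (pos ε1 Z1 N10 _ 0 hε1pos hZ1pos hN10pos le_rfl)
      (pos ε2 Z2 N20 _ 0 hε2pos hZ2pos hN20pos le_rfl)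
      (key ε1 Z1 N10 _ 0 S10 hε1pos hZ1pos hN10pos hp11 le_rfl hS10)
      (key ε2 Z2 N20 _ 0 S20 hε2pos hZ2pos hN20pos hp12 le_rfl hS20)
  · exact prodlt _ _ _ _ _ hS20
      (pos ε1 Z1 N10 _ 0 hε1pos hZ1pos hN10pos le_rfl)
      (pos ε2 Z2 N20 _ 0 hε2pos hZ2pos hN20pos le_rfl)
      (key ε1 Z1 N10 _ 0 S10 hε1pos hZ1pos hN10pos hp21 le_rfl hS10)
      (key ε2 Z2 N20 _ 0 S20 hε2pos hZ2pos hN20pos hp22 le_rfl hS20)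
  all_goals {
    have hb1 : ε1 * S10 + Z1 = N10 - ε1 * I10 := by rw [hZ1, hN10]; ring
    have hb2 : ε2 * S20 + Z2 = N20 - ε2 * I20 := by rw [hZ2, hN20]; ring
    have ha1pos : 0 < (ε1 * S10 + Z1) / N10 := by positivity
    have ha2pos : 0 < (ε2 * S20 + Z2) / N20 := by positivity
    have hI1N : I10 ≤ N10 := by rw [hN10]; linarith
    have hI2N : I20 ≤ N20 := by rw [hN20]; linarith
    have ha1le : (ε1 * S10 + Z1) / N10 ≤ 1 := by
      rw [div_le_one hN10pos, hb1]; linarith [mul_nonneg hε1pos.le hI10]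
    have ha2le : (ε2 * S20 + Z2) / N20 ≤ 1 := by
      rw [div_le_one hN20pos, hb2]; linarith [mul_nonneg hε2pos.le hI20]
    have hcases : 0 < I10 ∨ 0 < I20 := by
      rcases lt_or_eq_of_le hI10 with h | h
      · exact Or.inl h
      · exact Or.inr (by linarith)
    have hfac : ∀ p q : ℝ, 0 < p → 0 < q →
        ((ε1 * S10 + Z1) / N10) ^ p * ((ε2 * S20 + Z2) / N20) ^ q < 1 := by
      intro p q hp hq
      have h1le : ((ε1 * S10 + Z1) / N10) ^ p ≤ 1 :=
        Real.rpow_le_one ha1pos.le ha1le hp.le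
      have h2le : ((ε2 * S20 + Z2) / N20) ^ q ≤ 1 :=
        Real.rpow_le_one ha2pos.le ha2le hq.le
      have h1pos : 0 < ((ε1 * S10 + Z1) / N10) ^ p := Real.rpow_pos_of_pos ha1pos p
      have h2pos : 0 < ((ε2 * S20 + Z2) / N20) ^ q := Real.rpow_pos_of_pos ha2pos q
      rcases hcases with h | h
      · have ha1lt : (ε1 * S10 + Z1) / N10 < 1 := by
          rw [div_lt_one hN10pos, hb1]; linarith [mul_pos hε1pos h]
        have h1lt : ((ε1 * S10 + Z1) / N10) ^ p < 1 :=
          Real.rpow_lt_one ha1pos.le ha1lt hp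
        calc ((ε1 * S10 + Z1) / N10) ^ p * ((ε2 * S20 + Z2) / N20) ^ q
            ≤ ((ε1 * S10 + Z1) / N10) ^ p * 1 := mul_le_mul_of_nonneg_left h2le h1pos.le
          _ = ((ε1 * S10 + Z1) / N10) ^ p := mul_one _
          _ < 1 := h1lt
      · have ha2lt : (ε2 * S20 + Z2) / N20 < 1 := by
          rw [div_lt_one hN20pos, hb2]; linarith [mul_pos hε2pos h]
        have h2lt : ((ε2 * S20 + Z2) / N20) ^ q < 1 :=
          Real.rpow_lt_one ha2pos.le ha2lt hq
        calc ((ε1 * S10 + Z1) / N10) ^ p * ((ε2 * S20 + Z2) / N20) ^ q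
            ≤ 1 * ((ε2 * S20 + Z2) / N20) ^ q := mul_le_mul_of_nonneg_right h1le h2pos.le
          _ = ((ε2 * S20 + Z2) / N20) ^ q := one_mul _
          _ < 1 := h2lt
    simp only [Tmap]
    first
    | (calc S10 * ((ε1 * S10 + Z1) / N10) ^ (β11/μ1) * ((ε2 * S20 + Z2) / N20) ^ (β12/μ2)
          = S10 * (((ε1 * S10 + Z1) / N10) ^ (β11/μ1) * ((ε2 * S20 + Z2) / N20) ^ (β12/μ2)) := by ring
        _ < S10 * 1 := mul_lt_mul_of_pos_left (hfac _ _ hp11 hp12) hS10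
        _ = S10 := by ring)
    | (calc S20 * ((ε1 * S10 + Z1) / N10) ^ (β21/μ1) * ((ε2 * S20 + Z2) / N20) ^ (β22/μ2)
          = S20 * (((ε1 * S10 + Z1) / N10) ^ (β21/μ1) * ((ε2 * S20 + Z2) / N20) ^ (β22/μ2)) := by ring
        _ < S20 * 1 := mul_lt_mul_of_pos_left (hfac _ _ hp21 hp22) hS20
        _ = S20 := by ring)
  }
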